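/- Let μ, ν̃ be probability density functions on ℝ (nonnegative, integrable, integral 1) and a ∈ ℝ. Define s, q : ℝ → ℝ by the ODE system s′(x) = Θ₊(q(x))μ(x) + (1 − Θ₊(q(x)))·min(μ(x), ν̃(a−x)), q′(x) = Θ₊(q(x))(ν̃(a−x) − μ(x)) + (1 − Θ₊(q(x)))·max(ν̃(a−x) − μ(x), 0), with s(−∞) = q(−∞) = 0 and Θ₊(z) = 1 for z > 0, 0 otherwise. Then q(x) ≥ 0 for all x, s is nondecreasing, and s(x) ≤ min(∫_{−∞}^x μ(t) dt, ∫_{a−x}^{∞} ν̃(t) dt + q(x)) for all x; in particular lim_{x→∞} s(x) ≤ 1. -/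

import Mathlib

open MeasureTheory Filter

/-- `Θ₊(z) = 1` for `z > 0`, else `0`. -/
noncomputable def Θp (z : ℝ) : ℝ := if 0 < z then 1 else 0

/-- Properties of the Carathéodory solution of the ODE system computing the maximal classical
arrival probability: `q ≥ 0`, `s` is nondecreasing, `s` is bounded by both cumulative masses,
and the limit of `s` at `+∞` is at most `1`. -/
theorem stmt18 (μ νt : ℝ → ℝ) (a : ℝ)
    (hμ0 : ∀ x, 0 ≤ μ x) (hν0 : ∀ x, 0 ≤ νt x)
    (hμi : Integrable μ) (hνi : Integrable νt)
    (hμ1 : (∫ x, μ x) = 1) (hν1 : (∫ x, νt x) = 1)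
    (s q : ℝ → ℝ)
    (hq : ∀ x, q x = ∫ t in Set.Iic x,
        (Θp (q t) * (νt (a - t) - μ t) + (1 - Θp (q t)) * max (νt (a - t) - μ t) 0))
    (hs : ∀ x, s x = ∫ t in Set.Iic x,
        (Θp (q t) * μ t + (1 - Θp (q t)) * min (μ t) (νt (a - t)))) :
    (∀ x, 0 ≤ q x) ∧ Monotone s ∧
    (∀ x, s x ≤ min (∫ t in Set.Iic x, μ t) ((∫ t in Set.Ici (a - x), νt t) + q x)) ∧
    Filter.limsup s Filter.atTop ≤ 1 := by
  classical
  set f : ℝ → ℝ :=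
    fun t => Θp (q t) * (νt (a - t) - μ t) + (1 - Θp (q t)) * max (νt (a - t) - μ t) 0 with hfdef
  set g : ℝ → ℝ :=
    fun t => Θp (q t) * μ t + (1 - Θp (q t)) * min (μ t) (νt (a - t)) with hgdef
  have hq' : ∀ x, q x = ∫ t in Set.Iic x, f t := hq
  have hs' : ∀ x, s x = ∫ t in Set.Iic x, g t := hs
  have hν'i : Integrable (fun t => νt (a - t)) := hνi.comp_sub_left a
  have hfcases : ∀ t, f t = if 0 < q t then νt (a - t) - μ t else max (νt (a - t) - μ t) 0 := by
    intro t
    simp only [hfdef, Θp]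
    split <;> ring
  have hgcases : ∀ t, g t = if 0 < q t then μ t else min (μ t) (νt (a - t)) := by
    intro t
    simp only [hgdef, Θp]
    split <;> ring
  have hbound : ∀ t, ‖f t‖ ≤ μ t + νt (a - t) := by
    intro t
    rw [hfcases, Real.norm_eq_abs, abs_le]
    have h1 := hμ0 t
    have h2 := hν0 (a - t)
    split
    · constructor <;> linarith
    · constructor
      · have : (0:ℝ) ≤ max (νt (a - t) - μ t) 0 := le_max_right _ _
        linarith
      · exact max_le (by linarith) (by linarith)
  have hb : Integrable (fun t => μ t + νt (a - t)) := hμi.add hν'i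
  have hmaxm : AEStronglyMeasurable (fun t => max (νt (a - t) - μ t) 0) volume := by
    exact (hν'i.aestronglyMeasurable.sub hμi.aestronglyMeasurable).sup aestronglyMeasurable_const
  -- the set of points up to which f is integrable
  set A : Set ℝ := {x | IntegrableOn f (Set.Iic x) volume} with hA
  have hAdc : ∀ ⦃x y : ℝ⦄, x ∈ A → y ≤ x → y ∈ A := fun x y hx hxy =>
    hx.mono_set (Set.Iic_subset_Iic.2 hxy)
  have hqz : ∀ x, x ∉ A → q x = 0 := fun x hx => by rw [hq' x]; exact integral_undef hx
  have hfz : ∀ x, x ∉ A → f x = max (νt (a - x) - μ x) 0 := by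
    intro x hx
    rw [hfcases, hqz x hx, if_neg (lt_irrefl 0)]
  have hfz' : ∀ (T : Set ℝ), T ⊆ Aᶜ → MeasurableSet T →
      AEStronglyMeasurable f (volume.restrict T) := by
    intro T hT hTm
    refine hmaxm.restrict.congr ?_
    refine (ae_restrict_iff' hTm).2 (ae_of_all _ fun t ht => ?_)
    exact (hfz t (hT ht)).symm
  have key : AEStronglyMeasurable f volume := by
    by_cases hall : ∀ x : ℝ, x ∈ A
    · have : (Set.univ : Set ℝ) = ⋃ n : ℕ, Set.Iic (n : ℝ) := by
        ext x
        simp only [Set.mem_univ, Set.mem_iUnion, Set.mem_Iic, true_iff]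
        exact exists_nat_ge x
      have h := AEStronglyMeasurable.iUnion (f := f) (μ := volume)
        (s := fun n : ℕ => Set.Iic (n : ℝ)) (fun n => (hall (n : ℝ)).aestronglyMeasurable)
      rwa [← this, Measure.restrict_univ] at h
    · push_neg at hall
      obtain ⟨x₀, hx₀⟩ := hall
      by_cases hAne : A.Nonempty
      · have hbddA : BddAbove A := by
          refine ⟨x₀, fun y hy => ?_⟩
          by_contra h
          push_neg at h
          exact hx₀ (hAdc hy h.le)
        set c := sSup A with hc
        have hIio : Set.Iio c ⊆ A := by
          intro x hx
          obtain ⟨y, hyA, hxy⟩ := exists_lt_of_lt_csSup hAne hx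
          exact hAdc hyA hxy.le
        have h1 : AEStronglyMeasurable f (volume.restrict (Set.Iio c)) := by
          have hUio : Set.Iio c = ⋃ n : ℕ, Set.Iic (c - 1 / (n + 1)) := by
            ext x
            simp only [Set.mem_Iio, Set.mem_iUnion, Set.mem_Iic]
            constructor
            · intro hx
              obtain ⟨n, hn⟩ := exists_nat_one_div_lt (show (0:ℝ) < c - x by linarith)
              exact ⟨n, by linarith⟩
            · rintro ⟨n, hn⟩
              have : (0:ℝ) < 1 / (n + 1) := by positivity
              linarith
          rw [hUio]
          refine AEStronglyMeasurable.iUnion fun n => ?_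
          have : (0:ℝ) < 1 / (n + 1) := by positivity
          exact (hIio (show c - 1 / (n+1) < c by linarith)).aestronglyMeasurable
        have h2 : AEStronglyMeasurable f (volume.restrict (Set.Ioi c)) := by
          refine hfz' _ (fun t ht => ?_) measurableSet_Ioi
          intro htA
          exact absurd (le_csSup hbddA htA) (not_le.2 ht)
        have h3 : AEStronglyMeasurable f (volume.restrict (Set.Iio c ∪ Set.Ioi c)) :=
          aestronglyMeasurable_union_iff.2 ⟨h1, h2⟩
        have h4 : Set.Iio c ∪ Set.Ioi c = ({c} : Set ℝ)ᶜ := by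
          ext x
          simp only [Set.mem_union, Set.mem_Iio, Set.mem_Ioi, Set.mem_compl_iff,
            Set.mem_singleton_iff]
          constructor
          · rintro (h | h) rfl <;> exact lt_irrefl _ h
          · intro h
            rcases lt_trichotomy x c with h' | h' | h'
            · exact Or.inl h'
            · exact absurd h' h
            · exact Or.inr h'
        have h5 : volume.restrict (({c} : Set ℝ)ᶜ) = volume := by
          have : (({c} : Set ℝ)ᶜ : Set ℝ) =ᵐ[volume] (Set.univ : Set ℝ) := by
            rw [ae_eq_univ, compl_compl]
            exact Real.volume_singleton
          rw [Measure.restrict_congr_set this, Measure.restrict_univ]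
        rw [h4, h5] at h3
        exact h3
      · -- A is empty: q ≡ 0 and f is the max function everywhere
        rw [Set.not_nonempty_iff_eq_empty] at hAne
        have : f = fun t => max (νt (a - t) - μ t) 0 := by
          funext t
          exact hfz t (by rw [hAne]; exact Set.notMem_empty t)
        rw [this]
        exact hmaxm
  have hfi : Integrable f := hb.mono' key (ae_of_all _ hbound)
  -- continuity of q
  have hqc : Continuous q := by
    have heq : ∀ x, (∫ t in Set.Iic (0:ℝ), f t) + ∫ t in (0:ℝ)..x, f t = q x := by
      intro x
      rw [hq' x, ← intervalIntegral.integral_Iic_sub_Iic hfi.integrableOn hfi.integrableOn]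
      ring
    exact (continuous_const.add
      (intervalIntegral.continuous_primitive (fun a b => hfi.intervalIntegrable) 0)).congr heq
  -- measurability of g
  have hP : MeasurableSet {t : ℝ | 0 < q t} :=
    measurableSet_lt measurable_const hqc.measurable
  have hgm : AEStronglyMeasurable g volume := by
    have : g = Set.piecewise {t : ℝ | 0 < q t} μ (fun t => min (μ t) (νt (a - t))) := by
      funext t
      by_cases h : 0 < q t <;>
        simp [Set.piecewise, Set.mem_setOf_eq, h, hgcases t]
    rw [this]
    exact AEStronglyMeasurable.piecewise hP hμi.aestronglyMeasurable.restrict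
      ((hμi.aestronglyMeasurable.inf hν'i.aestronglyMeasurable).restrict)
  have hg0 : ∀ t, 0 ≤ g t := by
    intro t
    rw [hgcases]
    split
    · exact hμ0 t
    · exact le_min (hμ0 t) (hν0 (a - t))
  have hgleμ : ∀ t, g t ≤ μ t := by
    intro t
    rw [hgcases]
    split
    · exact le_rfl
    · exact min_le_left _ _
  have hgi : Integrable g := by
    refine hμi.mono' hgm (ae_of_all _ fun t => ?_)
    rw [Real.norm_eq_abs, abs_of_nonneg (hg0 t)]
    exact hgleμ t
  have hfnn : ∀ t, ¬ 0 < q t → 0 ≤ f t := by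
    intro t ht
    rw [hfcases, if_neg ht]
    exact le_max_right _ _
  -- q is nonnegative
  have hqnn : ∀ x, 0 ≤ q x := by
    intro x₀
    by_contra hneg
    push_neg at hneg
    set S := {t : ℝ | 0 < q t} ∩ Set.Iic x₀ with hS
    by_cases hSne : S.Nonempty
    · set c := sSup S with hc
      have hbdd : BddAbove S := ⟨x₀, fun t ht => ht.2⟩
      have hcmem : c ∈ closure S := csSup_mem_closure hSne hbdd
      have hqc0 : 0 ≤ q c := by
        have hclosed : IsClosed {t : ℝ | 0 ≤ q t} := isClosed_le continuous_const hqc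
        exact closure_minimal (fun t ht => show (0:ℝ) ≤ q t from le_of_lt ht.1) hclosed hcmem
      have hcx : c ≤ x₀ := csSup_le hSne fun t ht => ht.2
      have hclt : c < x₀ := by
        rcases lt_or_eq_of_le hcx with h | h
        · exact h
        · exfalso; rw [h] at hqc0; linarith
      have hfpos : ∀ t ∈ Set.Ioc c x₀, 0 ≤ f t := by
        intro t ht
        refine hfnn t fun hpos => ?_
        exact absurd (le_csSup hbdd ⟨hpos, ht.2⟩) (not_le.2 ht.1)
      have hsplit : q x₀ = q c + ∫ t in Set.Ioc c x₀, f t := by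
        rw [hq' x₀, hq' c, ← setIntegral_union (Set.Iic_disjoint_Ioc le_rfl) measurableSet_Ioc
          hfi.integrableOn hfi.integrableOn, Set.Iic_union_Ioc_eq_Iic hclt.le]
      have hpos : 0 ≤ ∫ t in Set.Ioc c x₀, f t := setIntegral_nonneg measurableSet_Ioc hfpos
      linarith
    · have hall : ∀ t ∈ Set.Iic x₀, 0 ≤ f t := by
        intro t ht
        refine hfnn t fun hpos => ?_
        exact hSne ⟨t, hpos, ht⟩
      have : 0 ≤ q x₀ := by
        rw [hq' x₀]
        exact setIntegral_nonneg measurableSet_Iic hall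
      linarith
  -- s is monotone
  have hmono : Monotone s := by
    intro x y hxy
    have hsplit : s y = s x + ∫ t in Set.Ioc x y, g t := by
      rw [hs' x, hs' y, ← setIntegral_union (Set.Iic_disjoint_Ioc le_rfl) measurableSet_Ioc
        hgi.integrableOn hgi.integrableOn, Set.Iic_union_Ioc_eq_Iic hxy]
    have hpos : 0 ≤ ∫ t in Set.Ioc x y, g t :=
      setIntegral_nonneg measurableSet_Ioc fun t _ => hg0 t
    linarith
  -- first bound
  have hμbound : ∀ x, s x ≤ ∫ t in Set.Iic x, μ t := by
    intro x
    rw [hs' x]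
    exact setIntegral_mono_on hgi.integrableOn hμi.integrableOn measurableSet_Iic
      fun t _ => hgleμ t
  -- the key identity s x + q x = ∫_{Ici (a-x)} νt
  have hsum : ∀ x, s x + q x = ∫ t in Set.Ici (a - x), νt t := by
    intro x
    have h1 : s x + q x = ∫ t in Set.Iic x, (g t + f t) := by
      rw [hs' x, hq' x, integral_add hgi.integrableOn hfi.integrableOn]
    have h2 : (fun t => g t + f t) = fun t => νt (a - t) := by
      funext t
      rw [hgcases, hfcases]
      by_cases h : 0 < q t
      · rw [if_pos h, if_pos h]; ring
      · rw [if_neg h, if_neg h]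
        rcases le_total (νt (a - t)) (μ t) with hle | hle
        · rw [min_eq_right hle, max_eq_right (by linarith)]; ring
        · rw [min_eq_left hle, max_eq_left (by linarith)]; ring
    rw [h1, h2]
    have hT : MeasurePreserving (fun t : ℝ => a - t) volume volume :=
      Measure.measurePreserving_sub_left volume a
    have hTe : MeasurableEmbedding (fun t : ℝ => a - t) :=
      (Homeomorph.subLeft a).measurableEmbedding
    have hpre : (fun t : ℝ => a - t) ⁻¹' Set.Ici (a - x) = Set.Iic x := by
      ext t
      simp only [Set.mem_preimage, Set.mem_Ici, Set.mem_Iic]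
      constructor <;> intro h <;> linarith
    rw [← hpre, hT.setIntegral_preimage_emb hTe]
  -- bounds and limsup
  have hνbound : ∀ x, s x ≤ (∫ t in Set.Ici (a - x), νt t) + q x := by
    intro x
    have := hsum x
    have := hqnn x
    linarith
  have hsle1 : ∀ x, s x ≤ 1 := by
    intro x
    refine (hμbound x).trans ?_
    rw [← hμ1]
    exact setIntegral_le_integral hμi (ae_of_all _ hμ0)
  have hs0 : ∀ x, 0 ≤ s x := by
    intro x
    rw [hs' x]
    exact setIntegral_nonneg measurableSet_Iic fun t _ => hg0 t
  refine ⟨hqnn, hmono, fun x => le_min (hμbound x) (hνbound x), ?_⟩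
  have hcb : Filter.IsCoboundedUnder (· ≤ ·) Filter.atTop s := by
    apply Filter.IsBoundedUnder.isCoboundedUnder_le
    exact ⟨0, Filter.eventually_map.2 (Filter.Eventually.of_forall fun x => hs0 x)⟩
  exact Filter.limsup_le_of_le hcb (Filter.Eventually.of_forall hsle1)
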